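/- arXiv:1911.00207 — 2 statements merged into one kernel-verified Lean document; each statement's English description precedes it below -/
import Mathlib

section
/- Let M be a matroid on a finite set E with rank function r, and let (C_1, …, C_t) be a proper sequence of circuits of M. If for some X ⊆ E equality r(X) = |X ∪ C_{≤t}| − t holds, then C_{≤t} ⊆ cl_M(X) and every element e ∈ X \ C_{≤t} is a coloop of the restriction M|_X. -/
open Set Matroid

variable {α : Type*}

/-- A circuit of a matroid: a minimal dependent subset of the ground set. -/
def IsCircuit (M : Matroid α) (C : Set α) : Prop :=
  C ⊆ M.E ∧ ¬ M.Indep C ∧ ∀ e ∈ C, M.Indep (C \ {e})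

/-- The (natural-number) rank of a set in a matroid: the size of a largest
independent subset. -/
noncomputable def nr (M : Matroid α) (X : Set α) : ℕ :=
  sSup {k | ∃ I, I ⊆ X ∧ M.Indep I ∧ I.ncard = k}

/-- The rank of a matroid. -/
noncomputable def mrk (M : Matroid α) : ℕ := nr M M.E

/-- A cyclic set: a (possibly empty) union of circuits. -/
def Cyclic (M : Matroid α) (X : Set α) : Prop :=
  X ⊆ M.E ∧ ∀ e ∈ X, ∃ C, _root_.IsCircuit M C ∧ C ⊆ X ∧ e ∈ C

/-- A modular pair of sets in a matroid. -/
def ModPair (M : Matroid α) (X Y : Set α) : Prop :=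
  nr M X + nr M Y = nr M (X ∩ Y) + nr M (X ∪ Y)

/-- A coloop of a matroid: an element contained in every base. -/
def IsColoop (M : Matroid α) (e : α) : Prop := ∀ B, M.IsBase B → e ∈ B

/-- A proper sequence of circuits of a matroid: each circuit is not contained in the
union of the preceding ones. -/
def ProperCircuitSeq (M : Matroid α) {t : ℕ} (C : Fin t → Set α) : Prop :=
  (∀ i, _root_.IsCircuit M (C i)) ∧
    ∀ i : Fin t, 0 < (i : ℕ) → ¬ C i ⊆ ⋃ j ∈ {j : Fin t | j < i}, C j


section lems
variable [Fintype α] {M : Matroid α} {X Y A B : Set α} {I J : Set α} {e : α}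

lemma nr_nonempty' : {k | ∃ I, I ⊆ X ∧ M.Indep I ∧ I.ncard = k}.Nonempty :=
  ⟨0, ∅, empty_subset _, M.empty_indep, Set.ncard_empty _⟩

lemma nr_bdd' : BddAbove {k | ∃ I, I ⊆ X ∧ M.Indep I ∧ I.ncard = k} := by
  refine ⟨Fintype.card α, ?_⟩
  rintro k ⟨J, _, _, rfl⟩
  simpa [Set.ncard_univ] using Set.ncard_le_ncard (subset_univ J) (Set.toFinite _)

lemma le_nr (hJ : M.Indep J) (hJX : J ⊆ X) : J.ncard ≤ nr M X :=
  le_csSup nr_bdd' ⟨J, hJX, hJ, rfl⟩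

lemma nr_le' {n : ℕ} (h : ∀ J, M.Indep J → J ⊆ X → J.ncard ≤ n) : nr M X ≤ n := by
  refine csSup_le nr_nonempty' ?_
  rintro k ⟨J, hJX, hJ, rfl⟩
  exact h J hJ hJX

lemma Basis'_nr (hI : M.IsBasis' I X) : nr M X = I.ncard := by
  refine le_antisymm (nr_le' fun J hJ hJX => ?_) (le_nr hI.indep hI.subset)
  obtain ⟨J', hJ', hJJ'⟩ := hJ.subset_isBasis'_of_subset hJX
  have hcard := hJ'.encard_eq_encard hI
  have : J'.ncard = I.ncard := by simp [Set.ncard_def, hcard]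
  exact this ▸ Set.ncard_le_ncard hJJ' (Set.toFinite _)

lemma nr_mono' (h : X ⊆ Y) : nr M X ≤ nr M Y :=
  nr_le' fun J hJ hJX => le_nr hJ (hJX.trans h)

lemma nr_union_le' : nr M (A ∪ B) ≤ nr M A + B.ncard := by
  refine nr_le' fun J hJ hJX => ?_
  have h1 : J = (J ∩ A) ∪ (J \ A) := by simp [Set.inter_union_diff]
  calc J.ncard = ((J ∩ A) ∪ (J \ A)).ncard := by rw [← h1]
    _ ≤ (J ∩ A).ncard + (J \ A).ncard := Set.ncard_union_le _ _
    _ ≤ nr M A + B.ncard := by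
        refine add_le_add (le_nr (hJ.inter_right A) inter_subset_right)
          (Set.ncard_le_ncard (fun x hx => ?_) (Set.toFinite _))
        exact (hJX hx.1).resolve_left hx.2

lemma nr_le_of_subset_closure' (h : A ⊆ M.closure B) : nr M A ≤ nr M B := by
  obtain ⟨I, hI⟩ := M.exists_isBasis' B
  rw [Basis'_nr hI]
  refine nr_le' fun J hJ hJA => ?_
  have hJcl : J ⊆ M.closure I := by
    rw [hI.closure_eq_closure]; exact hJA.trans h
  obtain ⟨J', hJ', hJJ'⟩ := hJ.subset_isBasis_of_subset hJcl (M.closure_subset_ground I)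
  have hIcl : M.IsBasis I (M.closure I) := hI.indep.isBasis_closure
  have hcard := hJ'.encard_eq_encard hIcl
  have : J'.ncard = I.ncard := by simp [Set.ncard_def, hcard]
  exact this ▸ Set.ncard_le_ncard hJJ' (Set.toFinite _)

lemma subset_closure_of_nr_eq' (hXY : X ⊆ Y) (hY : Y ⊆ M.E)
    (h : nr M X = nr M Y) : Y ⊆ M.closure X := by
  obtain ⟨I, hI⟩ := M.exists_isBasis X (hXY.trans hY)
  obtain ⟨J, hJ, hIJ⟩ := hI.indep.subset_isBasis_of_subset (hI.subset.trans hXY) hY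
  have hcard : J.ncard ≤ I.ncard := by
    rw [← Basis'_nr hI.isBasis', ← Basis'_nr hJ.isBasis', h]
  have hIJ' : I = J := Set.eq_of_subset_of_ncard_le hIJ hcard (Set.toFinite _)
  calc Y ⊆ M.closure J := hJ.subset_closure
    _ = M.closure I := by rw [hIJ']
    _ ⊆ M.closure X := M.closure_subset_closure hI.subset

end lems

section main
variable [Fintype α] {M : Matroid α}

lemma IsCircuit.mem_closure' {C : Set α} {e : α} (hC : _root_.IsCircuit M C) (he : e ∈ C) :
    e ∈ M.closure (C \ {e}) := by
  have hI : M.Indep (C \ {e}) := hC.2.2 e he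
  have hdep : M.Dep (insert e (C \ {e})) := by
    rw [Set.insert_diff_singleton, Set.insert_eq_of_mem he]
    exact ⟨hC.2.1, hC.1⟩
  exact ((hI.insert_dep_iff).mp hdep).1

end main


/-- If `(C_1, …, C_t)` is a proper sequence of circuits of `M` and
`r(X) = |X ∪ C_{≤t}| − t` for some `X ⊆ E`, then `C_{≤t} ⊆ cl_M(X)` and every
element of `X \ C_{≤t}` is a coloop of the restriction `M|_X`. -/
theorem closure_and_coloops_of_rank_eq [Fintype α] (M : Matroid α) {t : ℕ}
    (C : Fin t → Set α) (hC : ProperCircuitSeq M C) (X : Set α) (hX : X ⊆ M.E)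
    (heq : nr M X + t = (X ∪ ⋃ i, C i).ncard) :
    (⋃ i, C i) ⊆ M.closure X ∧ ∀ e ∈ X \ ⋃ i, C i, _root_.IsColoop (M ↾ X) e := by
  classical
  set S : ℕ → Set α := fun k => ⋃ (i : Fin t) (_ : (i : ℕ) < k), C i with hS
  have hCE : ∀ i, C i ⊆ M.E := fun i => (hC.1 i).1
  have hSE : ∀ k, S k ⊆ M.E := by
    intro k; simp only [hS, iUnion_subset_iff]; exact fun i _ => hCE i
  have hSub : ∀ i : Fin t, ∀ k, (i : ℕ) < k → C i ⊆ S k := by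
    intro i k hik x hx
    exact mem_iUnion.mpr ⟨i, mem_iUnion.mpr ⟨hik, hx⟩⟩
  have hSmono : ∀ {k l : ℕ}, k ≤ l → S k ⊆ S l := by
    intro k l hkl x hx
    obtain ⟨i, hi⟩ := mem_iUnion.mp hx
    obtain ⟨hik, hxi⟩ := mem_iUnion.mp hi
    exact hSub i l (lt_of_lt_of_le hik hkl) hxi
  have hSt : S t = ⋃ i, C i := by
    apply subset_antisymm
    · simp only [hS, iUnion_subset_iff]
      exact fun i _ => subset_iUnion C i
    · exact iUnion_subset fun i => hSub i t i.2
  have hstep : ∀ k (hk : k < t), S (k + 1) = S k ∪ C ⟨k, hk⟩ := by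
    intro k hk
    apply subset_antisymm
    · intro x hx
      obtain ⟨i, hi⟩ := mem_iUnion.mp hx
      obtain ⟨hik, hxi⟩ := mem_iUnion.mp hi
      rcases Nat.lt_succ_iff_lt_or_eq.mp hik with h | h
      · exact Or.inl (hSub i k h hxi)
      · right; rwa [show (⟨k, hk⟩ : Fin t) = i from (Fin.ext h.symm)]
    · refine union_subset (hSmono (Nat.le_succ k)) ?_
      exact hSub ⟨k, hk⟩ (k + 1) (Nat.lt_succ_self k)
  have hproper : ∀ k (hk : k < t), ¬ C ⟨k, hk⟩ ⊆ S k := by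
    intro k hk hsub
    rcases Nat.eq_zero_or_pos k with rfl | hkpos
    · have hS0 : S 0 = ∅ := by simp [hS]
      rw [hS0, subset_empty_iff] at hsub
      exact (hC.1 ⟨0, hk⟩).2.1 (hsub ▸ M.empty_indep)
    · refine hC.2 ⟨k, hk⟩ hkpos ?_
      refine hsub.trans fun x hx => ?_
      obtain ⟨i, hi⟩ := mem_iUnion.mp hx
      obtain ⟨hik, hxi⟩ := mem_iUnion.mp hi
      simp only [mem_iUnion]
      exact ⟨i, ⟨by simpa [Fin.lt_def] using hik, hxi⟩⟩
  -- the key inductive nullity bound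
  have L1 : ∀ k, k ≤ t → nr M (S k) + k ≤ (S k).ncard := by
    intro k
    induction k with
    | zero =>
      intro _
      have hS0 : S 0 = ∅ := by simp [hS]
      rw [hS0]
      have h0 : nr M (∅ : Set α) ≤ 0 := nr_le' fun J _ hJ => by
        simp [subset_empty_iff.mp hJ]
      simpa using h0
    | succ k ih =>
      intro hk1
      have hk : k < t := hk1
      have IH := ih hk.le
      set Ck := C ⟨k, hk⟩ with hCk
      obtain ⟨e, heC, heS⟩ := not_subset.mp (hproper k hk)
      have hCkS : Ck ⊆ S (k + 1) := (hstep k hk) ▸ subset_union_right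
      have hecl : e ∈ M.closure (S (k + 1) \ {e}) := by
        refine M.closure_subset_closure ?_ ((hC.1 ⟨k, hk⟩).mem_closure' heC)
        exact diff_subset_diff_left hCkS
      have h1 : nr M (S (k + 1)) ≤ nr M (S (k + 1) \ {e}) := by
        refine nr_le_of_subset_closure' fun x hx => ?_
        by_cases hxe : x = e
        · exact hxe ▸ hecl
        · exact M.subset_closure _ (diff_subset.trans (hSE (k + 1))) ⟨hx, hxe⟩
      have h2 : nr M (S (k + 1) \ {e}) ≤ nr M (S k) + ((Ck \ S k) \ {e}).ncard := by
        refine le_trans (nr_mono' ?_) nr_union_le'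
        intro x hx
        obtain ⟨hx1, hx2⟩ := hx
        rw [hstep k hk] at hx1
        rcases hx1 with h | h
        · exact Or.inl h
        · by_cases hxS : x ∈ S k
          · exact Or.inl hxS
          · exact Or.inr ⟨⟨h, hxS⟩, hx2⟩
      have h3 : ((Ck \ S k) \ {e}).ncard + 1 = (Ck \ S k).ncard :=
        Set.ncard_diff_singleton_add_one ⟨heC, heS⟩ (Set.toFinite _)
      have h4 : (S (k + 1)).ncard = (S k).ncard + (Ck \ S k).ncard := by
        rw [hstep k hk, ← union_diff_self,
          Set.ncard_union_eq disjoint_sdiff_right (Set.toFinite _) (Set.toFinite _)]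
      omega
  -- the main argument
  set Y := X ∪ S t with hY
  have hXY : X ⊆ Y := subset_union_left
  have hSY : S t ⊆ Y := subset_union_right
  have hYE : Y ⊆ M.E := union_subset hX (hSE t)
  have heq' : nr M X + t = Y.ncard := by rwa [hY, hSt]
  have hY1 : nr M Y ≤ nr M (S t) + (Y \ S t).ncard := by
    refine le_trans (nr_mono' ?_) nr_union_le'
    intro x hx
    by_cases h : x ∈ S t
    · exact Or.inl h
    · exact Or.inr ⟨hx, h⟩
  have hY2 := L1 t le_rfl
  have hY3 : Y.ncard = (S t).ncard + (Y \ S t).ncard := by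
    rw [← Set.ncard_union_eq disjoint_sdiff_right (Set.toFinite _) (Set.toFinite _),
      union_diff_self, union_eq_self_of_subset_left hSY]
  have hY4 : nr M X ≤ nr M Y := nr_mono' hXY
  have hXYr : nr M X = nr M Y := by omega
  have hkey : nr M Y = nr M (S t) + (Y \ S t).ncard := by omega
  have hcl : Y ⊆ M.closure X := subset_closure_of_nr_eq' hXY hYE hXYr
  refine ⟨hSt ▸ hSY.trans hcl, ?_⟩
  intro e he
  obtain ⟨heX, heS⟩ := he
  rw [← hSt] at heS
  -- nr (Y \ {e}) < nr Y
  have h5 : nr M (Y \ {e}) ≤ nr M (S t) + ((Y \ S t) \ {e}).ncard := by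
    refine le_trans (nr_mono' ?_) nr_union_le'
    intro x hx
    obtain ⟨hx1, hx2⟩ := hx
    by_cases hxS : x ∈ S t
    · exact Or.inl hxS
    · exact Or.inr ⟨⟨hx1, hxS⟩, hx2⟩
  have h6 : ((Y \ S t) \ {e}).ncard + 1 = (Y \ S t).ncard :=
    Set.ncard_diff_singleton_add_one ⟨hXY heX, heS⟩ (Set.toFinite _)
  have h7 : nr M (Y \ {e}) + 1 ≤ nr M Y := by omega
  -- nr (X \ {e}) < nr X
  have h8 : nr M (X \ {e}) < nr M X := by
    rcases lt_or_eq_of_le (nr_mono' (M := M) (diff_subset (s := X) (t := {e}))) with h | h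
    · exact h
    · exfalso
      have hXcl : X ⊆ M.closure (X \ {e}) :=
        subset_closure_of_nr_eq' diff_subset hX h
      have : Y ⊆ M.closure (Y \ {e}) := by
        refine hcl.trans ?_
        refine (M.closure_subset_closure_of_subset_closure hXcl).trans
          (M.closure_subset_closure (diff_subset_diff_left hXY))
      have := nr_le_of_subset_closure' this
      omega
  -- conclude coloop
  intro B hB
  rw [Matroid.isBase_restrict_iff'] at hB
  by_contra heB
  have hBX : B ⊆ X \ {e} := fun x hx => ⟨hB.subset hx, fun hxe => heB (hxe ▸ hx)⟩
  have h9 : B.ncard ≤ nr M (X \ {e}) := le_nr hB.indep hBX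
  have h10 : nr M X = B.ncard := Basis'_nr hB
  omega
end

section
/- Let M be a matroid defined on the edge set of a graph G = (V, E) such that every circuit of M induces a 2-connected subgraph of G, and let X ⊆ E be a connected set in M with vertex set V(X). Then Σ_{v ∈ V(X)} min{ d_B(v) : B a base of M|_X } ≤ 2(r(X) + 1) − |V(X)|. -/
open Set Matroid

variable {α : Type*}

/-- The edges of the complete graph on a vertex set `X`. -/
def edgesOn {V : Type*} (X : Set V) : Set (Sym2 V) :=
  {e | ¬ e.IsDiag ∧ ∀ v ∈ e, v ∈ X}

/-- The set of vertices incident to an edge set. -/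
def verts {V : Type*} (F : Set (Sym2 V)) : Set V := {v | ∃ e ∈ F, v ∈ e}

/-- The degree of a vertex in an edge set. -/
noncomputable def edeg {V : Type*} (F : Set (Sym2 V)) (v : V) : ℕ :=
  {e ∈ F | v ∈ e}.ncard

/-- The subgraph of `G` induced by an edge set `C` is 2-connected: it has at least three
vertices, is connected, and deleting any single vertex leaves it connected. -/
def TwoConnEdges {V : Type*} (C : Set (Sym2 V)) : Prop :=
  3 ≤ (verts C).ncard ∧
  (∀ a ∈ verts C, ∀ b ∈ verts C, (SimpleGraph.fromEdgeSet C).Reachable a b) ∧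
  ∀ v ∈ verts C, ∀ a ∈ verts C \ {v}, ∀ b ∈ verts C \ {v},
    (SimpleGraph.fromEdgeSet {e ∈ C | v ∉ e}).Reachable a b

/-- A set `X` is connected in a matroid `M`: `X` is nonempty and every two distinct
elements of `X` lie in a common circuit of `M` contained in `X`. -/
def MConnected (M : Matroid α) (X : Set α) : Prop :=
  X.Nonempty ∧ ∀ e ∈ X, ∀ f ∈ X, e ≠ f →
    ∃ C, _root_.IsCircuit M C ∧ C ⊆ X ∧ e ∈ C ∧ f ∈ C


section MatroidAux

variable {α : Type*} [Finite α] {M : Matroid α}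

theorem IsCircuit.nonempty {C : Set α} (hC : _root_.IsCircuit M C) : C.Nonempty := by
  rcases C.eq_empty_or_nonempty with h | h
  · exact absurd (h ▸ M.empty_indep) hC.2.1
  · exact h

theorem IsCircuit.diff_indep {C : Set α} (hC : _root_.IsCircuit M C) {e : α} (he : e ∈ C) :
    M.Indep (C \ {e}) := hC.2.2 e he

theorem IsCircuit.ssubset_indep {C A : Set α} (hC : _root_.IsCircuit M C) (hA : A ⊂ C) : M.Indep A := by
  obtain ⟨e, heC, heA⟩ := Set.exists_of_ssubset hA
  exact (hC.diff_indep heC).subset (Set.subset_diff_singleton hA.subset heA)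

/-- every dependent set contains a circuit -/
theorem exists_circuit_of_dep {D : Set α} (hDE : D ⊆ M.E) (hD : ¬ M.Indep D) :
    ∃ C, C ⊆ D ∧ _root_.IsCircuit M C := by
  classical
  have key : ∀ n (D : Set α), D.ncard ≤ n → D ⊆ M.E → ¬ M.Indep D →
      ∃ C, C ⊆ D ∧ _root_.IsCircuit M C := by
    intro n
    induction n with
    | zero =>
      intro D hcard hDE hD
      rw [Nat.le_zero, Set.ncard_eq_zero D.toFinite] at hcard
      exact absurd (hcard ▸ M.empty_indep) hD
    | succ n ih =>
      intro D hcard hDE hD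
      by_cases h : ∀ e ∈ D, M.Indep (D \ {e})
      · exact ⟨D, Set.Subset.rfl, hDE, hD, h⟩
      · push_neg at h
        obtain ⟨e, heD, he⟩ := h
        have hlt : (D \ {e}).ncard < D.ncard := Set.ncard_diff_singleton_lt_of_mem heD D.toFinite
        obtain ⟨C, hCD, hC⟩ := ih (D \ {e}) (by omega) (Set.diff_subset.trans hDE) he
        exact ⟨C, hCD.trans Set.diff_subset, hC⟩
  exact key D.ncard D le_rfl hDE hD

theorem IsCircuit.mem_closure_diff {C : Set α} (hC : _root_.IsCircuit M C) {e : α} (he : e ∈ C) :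
    e ∈ M.closure (C \ {e}) := by
  have hind := hC.diff_indep he
  have hne : e ∉ C \ {e} := fun h => h.2 rfl
  have := hind.insert_indep_iff_of_notMem hne
  have hins : insert e (C \ {e}) = C := by
    rw [Set.insert_diff_singleton, Set.insert_eq_of_mem he]
  rw [hins] at this
  have heE : e ∈ M.E := hC.1 he
  by_contra hcl
  exact hC.2.1 (this.mpr ⟨heE, hcl⟩)

/-- the rank `nr` equals the cardinality of any basis -/
theorem nr_eq_ncard_of_basis {X B : Set α} (hB : M.IsBasis B X) : nr M X = B.ncard := by
  have hub : ∀ k ∈ {k | ∃ I, I ⊆ X ∧ M.Indep I ∧ I.ncard = k}, k ≤ B.ncard := by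
    rintro k ⟨I, hIX, hI, rfl⟩
    have hIr : (M ↾ X).Indep I := Matroid.restrict_indep_iff.mpr ⟨hI, hIX⟩
    obtain ⟨B', hB', hIB'⟩ := hIr.exists_isBase_superset
    have : B'.ncard = B.ncard := hB'.ncard_eq_ncard_of_isBase hB.restrict_isBase
    exact this ▸ Set.ncard_le_ncard hIB' B'.toFinite
  refine le_antisymm (csSup_le ⟨B.ncard, B, hB.subset, hB.indep, rfl⟩ hub) ?_
  exact le_csSup ⟨B.ncard, hub⟩ ⟨B, hB.subset, hB.indep, rfl⟩

/-- The key "ear" lemma: if `C` is a circuit minimizing `|C \ Y|` among circuits in `Y ∪ C`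
meeting both `Y` and its complement, then any basis of `Y` together with all but any one
element of `C \ Y` is a basis of `Y ∪ C`. -/
theorem ear_basis {Y C : Set α} (hY : Y ⊆ M.E) (hC : _root_.IsCircuit M C)
    (h1 : (C ∩ Y).Nonempty) (h2 : (C \ Y).Nonempty)
    (hmin : ∀ C', _root_.IsCircuit M C' → C' ⊆ Y ∪ C → (C' ∩ Y).Nonempty → (C' \ Y).Nonempty →
      (C \ Y).ncard ≤ (C' \ Y).ncard)
    {γ : α} (hγ : γ ∈ C \ Y) {B : Set α} (hB : M.IsBasis B Y) :
    M.IsBasis (B ∪ ((C \ Y) \ {γ})) (Y ∪ C) := by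
  classical
  set D := C \ Y with hD
  set B' := B ∪ (D \ {γ}) with hB'def
  have hBY : B ⊆ Y := hB.subset
  have hB'E : B' ⊆ M.E := Set.union_subset (hBY.trans hY) ((Set.diff_subset.trans Set.diff_subset).trans hC.1)
  have hDdisj : Disjoint Y D := Set.disjoint_sdiff_right
  -- independence
  have hind : M.Indep B' := by
    by_contra hdep
    obtain ⟨C'', hC''sub, hC''⟩ := exists_circuit_of_dep hB'E hdep
    have hC''YC : C'' ⊆ Y ∪ C :=
      hC''sub.trans (Set.union_subset_union hBY (Set.diff_subset.trans Set.diff_subset))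
    have hC''diff : C'' \ Y ⊆ D \ {γ} := by
      intro x hx
      rcases hC''sub hx.1 with h | h
      · exact absurd (hBY h) hx.2
      · exact h
    have hC''Y : (C'' ∩ Y).Nonempty := by
      by_contra hemp
      have hsub : C'' ⊆ D \ {γ} := by
        intro x hx
        refine hC''diff ⟨hx, fun hxY => hemp ⟨x, hx, hxY⟩⟩
      have hCind : M.Indep C'' := (hC.diff_indep hγ.1).subset
        (hsub.trans (fun x hx => ⟨hx.1.1, hx.2⟩))
      exact hC''.2.1 hCind
    have hC''D : (C'' \ Y).Nonempty := by
      by_contra hemp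
      rw [Set.not_nonempty_iff_eq_empty, Set.diff_eq_empty] at hemp
      have : C'' ⊆ B := fun x hx => by
        rcases hC''sub hx with h | h
        · exact h
        · exact absurd (hemp hx) (fun hxY => hDdisj.ne_of_mem hxY h.1 rfl)
      exact hC''.2.1 (hB.indep.subset this)
    have hle := hmin C'' hC'' hC''YC hC''Y hC''D
    have hle2 : (C'' \ Y).ncard ≤ (D \ {γ}).ncard :=
      Set.ncard_le_ncard hC''diff (D \ {γ}).toFinite
    have hlt : (D \ {γ}).ncard < D.ncard := Set.ncard_diff_singleton_lt_of_mem hγ D.toFinite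
    omega
  -- closure
  have hYcl : Y ⊆ M.closure B' := by
    refine (hB.subset_closure).trans (M.closure_subset_closure Set.subset_union_left)
  have hsubcl : Y ∪ C ⊆ M.closure B' := by
    rintro x (hx | hx)
    · exact hYcl hx
    · by_cases hxY : x ∈ Y
      · exact hYcl hxY
      · by_cases hxγ : x = γ
        · subst hxγ
          have h1' : C \ {x} ⊆ M.closure B' := by
            rintro y ⟨hyC, hyne⟩
            by_cases hyY : y ∈ Y
            · exact hYcl hyY
            · exact M.subset_closure B' hB'E (Or.inr ⟨⟨hyC, hyY⟩, hyne⟩)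
          exact M.closure_subset_closure_of_subset_closure h1' (hC.mem_closure_diff hx)
        · exact M.subset_closure B' hB'E (Or.inr ⟨⟨hx, hxY⟩, hxγ⟩)
  exact hind.isBasis_of_subset_of_subset_closure
    (Set.union_subset (hBY.trans Set.subset_union_left)
      ((Set.diff_subset.trans Set.diff_subset).trans Set.subset_union_right)) hsubcl

end MatroidAux

section GraphAux

variable {V : Type*} [Fintype V]

theorem verts_mono {F G : Set (Sym2 V)} (h : F ⊆ G) : verts F ⊆ verts G := by
  rintro v ⟨e, he, hv⟩; exact ⟨e, h he, hv⟩

theorem verts_union (F G : Set (Sym2 V)) : verts (F ∪ G) = verts F ∪ verts G := by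
  ext v
  constructor
  · rintro ⟨e, he | he, hv⟩
    · exact Or.inl ⟨e, he, hv⟩
    · exact Or.inr ⟨e, he, hv⟩
  · rintro (⟨e, he, hv⟩ | ⟨e, he, hv⟩)
    · exact ⟨e, Or.inl he, hv⟩
    · exact ⟨e, Or.inr he, hv⟩

theorem edeg_eq_zero_of_not_mem_verts {F : Set (Sym2 V)} {v : V} (h : v ∉ verts F) :
    edeg F v = 0 := by
  have : {e ∈ F | v ∈ e} = ∅ := by
    ext e; simp only [Set.mem_setOf_eq, Set.mem_empty_iff_false, iff_false, not_and]
    exact fun he hv => h ⟨e, he, hv⟩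
  rw [edeg, this, Set.ncard_empty]

theorem one_le_edeg_of_mem_verts {F : Set (Sym2 V)} {v : V} (h : v ∈ verts F) :
    1 ≤ edeg F v := by
  obtain ⟨e, he, hv⟩ := h
  exact Set.ncard_pos ({e ∈ F | v ∈ e}).toFinite |>.mpr ⟨e, he, hv⟩

theorem edeg_union_disjoint {F G : Set (Sym2 V)} (h : Disjoint F G) (v : V) :
    edeg (F ∪ G) v = edeg F v + edeg G v := by
  have hset : {e ∈ F ∪ G | v ∈ e} = {e ∈ F | v ∈ e} ∪ {e ∈ G | v ∈ e} := by
    ext e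
    simp only [Set.mem_setOf_eq, Set.mem_union]
    tauto
  simp only [edeg]
  rw [hset, Set.ncard_union_eq (h.mono (Set.sep_subset _ _) (Set.sep_subset _ _))
    ({e ∈ F | v ∈ e}).toFinite ({e ∈ G | v ∈ e}).toFinite]

theorem edeg_mono {F G : Set (Sym2 V)} (h : F ⊆ G) (v : V) : edeg F v ≤ edeg G v :=
  Set.ncard_le_ncard (fun e he => ⟨h he.1, he.2⟩) ({e ∈ G | v ∈ e}).toFinite

theorem edeg_diff_singleton {F : Set (Sym2 V)} {v : V} {γ : Sym2 V} (hγ : γ ∈ F) (hv : v ∈ γ) :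
    edeg (F \ {γ}) v + 1 = edeg F v := by
  have hset : {e ∈ F | v ∈ e} = {e ∈ F \ {γ} | v ∈ e} ∪ {γ} := by
    ext e
    simp only [Set.mem_setOf_eq, Set.mem_union, Set.mem_diff, Set.mem_singleton_iff]
    constructor
    · rintro ⟨heF, hve⟩
      by_cases h : e = γ
      · exact Or.inr h
      · exact Or.inl ⟨⟨heF, h⟩, hve⟩
    · rintro (⟨⟨heF, _⟩, hve⟩ | rfl)
      · exact ⟨heF, hve⟩
      · exact ⟨hγ, hv⟩
  have hdisj : Disjoint {e ∈ F \ {γ} | v ∈ e} ({γ} : Set (Sym2 V)) := by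
    rw [Set.disjoint_singleton_right]
    rintro ⟨⟨_, hne⟩, _⟩; exact hne rfl
  simp only [edeg]
  rw [hset, Set.ncard_union_eq hdisj ({e ∈ F \ {γ} | v ∈ e}).toFinite
    (Set.finite_singleton γ), Set.ncard_singleton]

theorem exists_two_verts {e : Sym2 V} (h : ¬ e.IsDiag) :
    ∃ a b : V, a ≠ b ∧ e = s(a, b) := by
  induction e using Sym2.ind with
  | _ a b => exact ⟨a, b, by simpa [Sym2.mk_isDiag_iff] using h, rfl⟩

/-- handshake lemma -/
theorem handshake {F : Set (Sym2 V)} (hF : ∀ e ∈ F, ¬ e.IsDiag) :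
    ∑ᶠ v ∈ verts F, edeg F v = 2 * F.ncard := by
  classical
  have hconv : ∑ᶠ v ∈ verts F, edeg F v = ∑ v ∈ (verts F).toFinite.toFinset, edeg F v := by
    rw [← finsum_mem_coe_finset, Set.Finite.coe_toFinset]
  rw [hconv]
  calc ∑ v ∈ (verts F).toFinite.toFinset, edeg F v
      = ∑ v ∈ (verts F).toFinite.toFinset,
          ∑ e ∈ F.toFinite.toFinset, (if v ∈ e then 1 else 0) := by
        refine Finset.sum_congr rfl (fun v _ => ?_)
        rw [edeg, Set.ncard_eq_toFinset_card _ (Set.toFinite _), ← Finset.card_filter]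
        congr 1
        ext e
        simp [Set.Finite.mem_toFinset, Set.mem_setOf_eq, and_comm]
    _ = ∑ e ∈ F.toFinite.toFinset, ∑ v ∈ (verts F).toFinite.toFinset, (if v ∈ e then 1 else 0) :=
        Finset.sum_comm
    _ = ∑ e ∈ F.toFinite.toFinset, 2 := by
        refine Finset.sum_congr rfl (fun e he => ?_)
        rw [Set.Finite.mem_toFinset] at he
        obtain ⟨a, b, hab, rfl⟩ := exists_two_verts (hF e he)
        rw [← Finset.card_filter]
        have : (verts F).toFinite.toFinset.filter (fun v => v ∈ s(a,b)) = {a, b} := by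
          ext v
          simp only [Finset.mem_filter, Set.Finite.mem_toFinset, Finset.mem_insert,
            Finset.mem_singleton, Sym2.mem_iff]
          constructor
          · rintro ⟨_, h⟩; exact h
          · rintro (rfl | rfl)
            · exact ⟨⟨s(v,b), he, by simp⟩, Or.inl rfl⟩
            · exact ⟨⟨s(a,v), he, by simp⟩, Or.inr rfl⟩
        rw [this, Finset.card_insert_of_notMem (by simpa using hab), Finset.card_singleton]
    _ = 2 * F.ncard := by
        rw [Finset.sum_const, smul_eq_mul,
          Set.ncard_eq_toFinset_card _ (Set.toFinite _), mul_comm]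

end GraphAux

section TwoConn

variable {V : Type*} [Fintype V]

theorem reach_closed {G : SimpleGraph V} {A : Set V} (hA : ∀ u w, G.Adj u w → u ∈ A → w ∈ A)
    {a b : V} (h : G.Reachable a b) (ha : a ∈ A) : b ∈ A := by
  obtain ⟨p⟩ := h
  induction p with
  | nil => exact ha
  | cons h p ih => exact ih (hA _ _ h ha)

/-- In a 2-connected edge set, any edge-partition into two nonempty parts shares
at least two vertices. -/
theorem twoconn_shared {C P : Set (Sym2 V)} (h2 : TwoConnEdges C) (hPC : P ⊆ C)
    (hP : P.Nonempty) (hQ : (C \ P).Nonempty) (hnd : ∀ e ∈ C, ¬ e.IsDiag) :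
    2 ≤ (verts P ∩ verts (C \ P)).ncard := by
  by_contra hlt
  push_neg at hlt
  have hss : verts P ∩ verts (C \ P) = ∅ ∨ ∃ x, verts P ∩ verts (C \ P) = {x} := by
    rcases Nat.lt_succ_iff.mp hlt with h
    rcases Set.ncard_le_one_iff_eq (s := verts P ∩ verts (C \ P)) |>.mp h with h' | h'
    · exact Or.inl h'
    · exact Or.inr h'
  -- choose x with (verts P ∩ verts (C \ P)) ⊆ {x} and x ∈ verts C
  have hCne : (verts C).Nonempty := by
    rcases h2 with ⟨h3, _, _⟩
    exact Set.nonempty_of_ncard_ne_zero (by omega)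
  obtain ⟨x, hxC, hsub⟩ : ∃ x, x ∈ verts C ∧ verts P ∩ verts (C \ P) ⊆ {x} := by
    rcases hss with h | ⟨x, hx⟩
    · exact ⟨hCne.some, hCne.some_mem, by rw [h]; exact Set.empty_subset _⟩
    · refine ⟨x, ?_, hx.subset⟩
      have : x ∈ verts P ∩ verts (C \ P) := hx ▸ rfl
      exact verts_mono hPC this.1
  -- pick a ∈ verts P \ {x}
  obtain ⟨p, hpP⟩ := hP
  obtain ⟨a1, a2, ha12, hpe⟩ := exists_two_verts (hnd p (hPC hpP))
  have ha1 : a1 ∈ verts P := ⟨p, hpP, by rw [hpe]; simp⟩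
  have ha2 : a2 ∈ verts P := ⟨p, hpP, by rw [hpe]; simp⟩
  obtain ⟨a, haP, hax⟩ : ∃ a, a ∈ verts P ∧ a ≠ x := by
    by_cases h : a1 = x
    · exact ⟨a2, ha2, fun hh => ha12 (h ▸ hh ▸ rfl)⟩
    · exact ⟨a1, ha1, h⟩
  obtain ⟨q, hqQ⟩ := hQ
  obtain ⟨b1, b2, hb12, hqe⟩ := exists_two_verts (hnd q hqQ.1)
  have hb1 : b1 ∈ verts (C \ P) := ⟨q, hqQ, by rw [hqe]; simp⟩
  have hb2 : b2 ∈ verts (C \ P) := ⟨q, hqQ, by rw [hqe]; simp⟩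
  obtain ⟨b, hbQ, hbx⟩ : ∃ b, b ∈ verts (C \ P) ∧ b ≠ x := by
    by_cases h : b1 = x
    · exact ⟨b2, hb2, fun hh => hb12 (h ▸ hh ▸ rfl)⟩
    · exact ⟨b1, hb1, h⟩
  -- reachability in C minus x
  have hreach := h2.2.2 x hxC a ⟨verts_mono hPC haP, hax⟩
    b ⟨verts_mono Set.diff_subset hbQ, hbx⟩
  -- the set verts P \ {x} is closed under adjacency in this graph
  have hclosed : ∀ u w, (SimpleGraph.fromEdgeSet {e ∈ C | x ∉ e}).Adj u w →
      u ∈ verts P \ {x} → w ∈ verts P \ {x} := by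
    intro u w hadj hu
    rw [SimpleGraph.fromEdgeSet_adj] at hadj
    obtain ⟨⟨heC, hxe⟩, hne⟩ := hadj
    have heP : s(u, w) ∈ P := by
      by_contra hP'
      have huQ : u ∈ verts (C \ P) := ⟨s(u,w), ⟨heC, hP'⟩, by simp⟩
      have : u ∈ ({x} : Set V) := hsub ⟨hu.1, huQ⟩
      exact hu.2 this
    refine ⟨⟨s(u,w), heP, by simp⟩, fun hwx => hxe ?_⟩
    rw [Set.mem_singleton_iff] at hwx
    subst hwx
    simp
  have hbA : b ∈ verts P \ {x} := reach_closed hclosed hreach ⟨haP, hax⟩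
  have : b ∈ ({x} : Set V) := hsub ⟨hbA.1, hbQ⟩
  exact hbx this

end TwoConn

section Chain

variable {α : Type*} [Finite α]

/-- An "ear decomposition chain": built from a circuit by repeatedly attaching circuits
that meet the current set, where each attached circuit minimizes the number of new
elements among circuits within the union. -/
inductive MChain (M : Matroid α) : Set α → Prop
  | circuit {C : Set α} (h : _root_.IsCircuit M C) : MChain M C
  | ear {Y C : Set α} (hY : MChain M Y) (hC : _root_.IsCircuit M C)
      (h1 : (C ∩ Y).Nonempty) (h2 : (C \ Y).Nonempty)
      (hmin : ∀ C', _root_.IsCircuit M C' → C' ⊆ Y ∪ C → (C' ∩ Y).Nonempty → (C' \ Y).Nonempty →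
        (C \ Y).ncard ≤ (C' \ Y).ncard) : MChain M (Y ∪ C)

theorem MChain.subset_ground {M : Matroid α} {X : Set α} (h : MChain M X) : X ⊆ M.E := by
  induction h with
  | circuit h => exact h.1
  | ear hY hC _ _ _ ihY => exact Set.union_subset ihY hC.1

theorem MChain.nonempty {M : Matroid α} {X : Set α} (h : MChain M X) : X.Nonempty := by
  induction h with
  | circuit h => exact h.nonempty
  | ear hY hC _ _ _ ihY => exact ihY.mono Set.subset_union_left

/-- Every connected set with two distinct elements carries a chain structure. -/
theorem MConnected.mchain {M : Matroid α} {X : Set α} (hconn : MConnected M X)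
    (hX : X ⊆ M.E) {e₀ f₀ : α} (he₀ : e₀ ∈ X) (hf₀ : f₀ ∈ X) (hef : e₀ ≠ f₀) :
    MChain M X := by
  classical
  -- growth step
  have grow : ∀ Z, MChain M Z → Z ⊆ X → Z ≠ X → ∃ Z', MChain M Z' ∧ Z' ⊆ X ∧ Z ⊂ Z' := by
    intro Z hZ hZX hne
    obtain ⟨f, hfX, hfZ⟩ : ∃ f, f ∈ X ∧ f ∉ Z := by
      by_contra h
      push_neg at h
      exact hne (Set.Subset.antisymm hZX (fun x hx => h x hx))
    obtain ⟨e, heZ⟩ := hZ.nonempty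
    obtain ⟨C₁, hC₁, hC₁X, heC₁, hfC₁⟩ := hconn.2 e (hZX heZ) f hfX
      (fun h => hfZ (h ▸ heZ))
    -- the set of candidate "ear sizes"
    set S : Set ℕ := {n | ∃ C', _root_.IsCircuit M C' ∧ C' ⊆ X ∧ (C' ∩ Z).Nonempty ∧
      (C' \ Z).Nonempty ∧ (C' \ Z).ncard = n} with hS
    have hSne : S.Nonempty := ⟨(C₁ \ Z).ncard, C₁, hC₁, hC₁X, ⟨e, heC₁, heZ⟩, ⟨f, hfC₁, hfZ⟩, rfl⟩
    obtain ⟨C₂, hC₂, hC₂X, hC₂Z, hC₂D, hC₂n⟩ := Nat.sInf_mem hSne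
    refine ⟨Z ∪ C₂, MChain.ear hZ hC₂ hC₂Z hC₂D ?_, Set.union_subset hZX hC₂X, ?_⟩
    · intro C' hC' hC'sub h1' h2'
      rw [hC₂n]
      exact Nat.sInf_le ⟨C', hC', hC'sub.trans (Set.union_subset hZX hC₂X), h1', h2', rfl⟩
    · refine ⟨Set.subset_union_left, fun hsub => ?_⟩
      obtain ⟨g, hg⟩ := hC₂D
      exact hg.2 (hsub (Or.inr hg.1))
  -- iterate
  have key : ∀ n (Z : Set α), MChain M Z → Z ⊆ X → (X \ Z).ncard ≤ n → MChain M X := by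
    intro n
    induction n with
    | zero =>
      intro Z hZ hZX hcard
      rw [Nat.le_zero, Set.ncard_eq_zero (X \ Z).toFinite, Set.diff_eq_empty] at hcard
      rwa [Set.Subset.antisymm hZX hcard] at hZ
    | succ n ih =>
      intro Z hZ hZX hcard
      by_cases hne : Z = X
      · rwa [hne] at hZ
      · obtain ⟨Z', hZ', hZ'X, hss⟩ := grow Z hZ hZX hne
        have hlt : (X \ Z').ncard < (X \ Z).ncard := by
          refine Set.ncard_lt_ncard ?_ (X \ Z).toFinite
          obtain ⟨g, hgZ', hgZ⟩ := Set.exists_of_ssubset hss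
          exact ⟨Set.diff_subset_diff_right hss.subset,
            fun h => (h ⟨hZ'X hgZ', hgZ⟩).2 hgZ'⟩
        exact ih Z' hZ' hZ'X (by omega)
  -- start from a circuit through e₀, f₀
  obtain ⟨C₀, hC₀, hC₀X, _, _⟩ := hconn.2 e₀ he₀ f₀ hf₀ hef
  exact key (X \ C₀).ncard C₀ (MChain.circuit hC₀) hC₀X le_rfl

end Chain

section Main

variable {V : Type*} [Fintype V]

/-- minimum degree of `v` over bases of `X` -/
noncomputable def mdeg (M : Matroid (Sym2 V)) (X : Set (Sym2 V)) (v : V) : ℕ :=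
  sInf {k | ∃ B, M.IsBasis B X ∧ k = edeg B v}

theorem mdeg_le {M : Matroid (Sym2 V)} {X B : Set (Sym2 V)} (hB : M.IsBasis B X) (v : V) :
    mdeg M X v ≤ edeg B v := Nat.sInf_le ⟨B, hB, rfl⟩

theorem exists_mdeg {M : Matroid (Sym2 V)} {X : Set (Sym2 V)} (hX : X ⊆ M.E) (v : V) :
    ∃ B, M.IsBasis B X ∧ mdeg M X v = edeg B v := by
  obtain ⟨B, hB⟩ := M.exists_isBasis X hX
  exact Nat.sInf_mem (⟨edeg B v, B, hB, rfl⟩ : {k | ∃ B, M.IsBasis B X ∧ k = edeg B v}.Nonempty)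

theorem finsum_verts_eq {F : Set (Sym2 V)} (f : V → ℕ) :
    ∑ᶠ v ∈ verts F, f v = ∑ v ∈ (verts F).toFinite.toFinset, f v := by
  rw [← finsum_mem_coe_finset, Set.Finite.coe_toFinset]

/-- the main inequality, proven for chains -/
theorem chain_ineq {EG : Set (Sym2 V)} (hEG : ∀ e ∈ EG, ¬ e.IsDiag)
    {M : Matroid (Sym2 V)} (hE : M.E = EG)
    (h2c : ∀ C, _root_.IsCircuit M C → TwoConnEdges C)
    {X : Set (Sym2 V)} (hch : MChain M X) :
    (∑ᶠ v ∈ verts X, mdeg M X v) + (verts X).ncard ≤ 2 * (nr M X + 1) := by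
  classical
  induction hch with
  | @circuit C hC =>
    have hnd : ∀ e ∈ C, ¬ e.IsDiag := fun e he => hEG e (hE ▸ hC.1 he)
    -- pointwise bound
    have hpt : ∀ v ∈ verts C, mdeg M C v + 1 ≤ edeg C v := by
      rintro v ⟨e, heC, hve⟩
      have hbasis : M.IsBasis (C \ {e}) C := by
        refine (hC.diff_indep heC).isBasis_of_subset_of_subset_closure Set.diff_subset ?_
        intro x hx
        by_cases hxe : x = e
        · subst hxe; exact hC.mem_closure_diff hx
        · exact M.subset_closure _ (Set.diff_subset.trans hC.1) ⟨hx, hxe⟩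
      have h1 := mdeg_le hbasis v
      have h2 := edeg_diff_singleton heC hve
      omega
    -- rank
    obtain ⟨e₀, he₀⟩ := hC.nonempty
    have hbasis₀ : M.IsBasis (C \ {e₀}) C := by
      refine (hC.diff_indep he₀).isBasis_of_subset_of_subset_closure Set.diff_subset ?_
      intro x hx
      by_cases hxe : x = e₀
      · subst hxe; exact hC.mem_closure_diff hx
      · exact M.subset_closure _ (Set.diff_subset.trans hC.1) ⟨hx, hxe⟩
    have hnr : nr M C + 1 = C.ncard := by
      rw [nr_eq_ncard_of_basis hbasis₀]
      exact Set.ncard_diff_singleton_add_one he₀ C.toFinite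
    -- sum up
    have hsum : (∑ᶠ v ∈ verts C, mdeg M C v) + (verts C).ncard ≤ 2 * C.ncard := by
      rw [finsum_verts_eq, Set.ncard_eq_toFinset_card _ (Set.toFinite _)]
      have hhs := handshake hnd
      rw [finsum_verts_eq] at hhs
      calc (∑ v ∈ (verts C).toFinite.toFinset, mdeg M C v) + (verts C).toFinite.toFinset.card
          = ∑ v ∈ (verts C).toFinite.toFinset, (mdeg M C v + 1) := by
            rw [Finset.sum_add_distrib, Finset.sum_const, smul_eq_mul, mul_one]
        _ ≤ ∑ v ∈ (verts C).toFinite.toFinset, edeg C v := by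
            refine Finset.sum_le_sum (fun v hv => ?_)
            rw [Set.Finite.mem_toFinset] at hv
            exact hpt v hv
        _ = 2 * C.ncard := hhs
    omega
  | @ear Y C hY hC h1 h2 hmin ih =>
    set D := C \ Y with hDdef
    have hYE : Y ⊆ M.E := hY.subset_ground
    have hDC : D ⊆ C := Set.diff_subset
    have hDisjYD : Disjoint Y D := Set.disjoint_sdiff_right
    have hXeq : Y ∪ C = Y ∪ D := (Set.union_diff_self (s := Y) (t := C)).symm
    have hVX : verts (Y ∪ C) = verts Y ∪ verts D := by rw [hXeq, verts_union]
    -- rank computation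
    obtain ⟨B₀, hB₀⟩ := M.exists_isBasis Y hYE
    obtain ⟨γ₀, hγ₀⟩ := id h2
    have hbX₀ := ear_basis hYE hC h1 h2 hmin hγ₀ hB₀
    have hdisjB : ∀ B, M.IsBasis B Y → ∀ γ, Disjoint B (D \ {γ}) := fun B hB γ =>
      (hDisjYD.mono_left hB.subset).mono_right Set.diff_subset
    have hnrX : nr M (Y ∪ C) + 1 = nr M Y + D.ncard := by
      rw [nr_eq_ncard_of_basis hbX₀, nr_eq_ncard_of_basis hB₀,
        Set.ncard_union_eq (hdisjB B₀ hB₀ γ₀) B₀.toFinite (D \ {γ₀}).toFinite]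
      have := Set.ncard_diff_singleton_add_one hγ₀ D.toFinite
      omega
    -- shared vertices
    have hshared : 2 ≤ (verts Y ∩ verts D).ncard := by
      have hQ : (C \ (C ∩ Y)).Nonempty := by
        rwa [Set.diff_self_inter]
      have h := twoconn_shared (h2c C hC) Set.inter_subset_left h1 hQ
        (fun e he => hEG e (hE ▸ hC.1 he))
      rw [Set.diff_self_inter] at h
      refine le_trans h (Set.ncard_le_ncard ?_ (verts Y ∩ verts D).toFinite)
      exact Set.inter_subset_inter_left _ (verts_mono Set.inter_subset_right)
    -- pointwise bound
    have hpt : ∀ v ∈ verts (Y ∪ C), mdeg M (Y ∪ C) v ≤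
        (if v ∈ verts Y then mdeg M Y v else 0) +
        (if v ∈ verts D then edeg D v - 1 else 0) := by
      intro v hv
      -- choose a basis of Y with minimum degree at v
      obtain ⟨Bv, hBv, hBve⟩ : ∃ B, M.IsBasis B Y ∧
          edeg B v = (if v ∈ verts Y then mdeg M Y v else 0) := by
        by_cases hvY : v ∈ verts Y
        · obtain ⟨B, hB, hBe⟩ := exists_mdeg hYE v
          exact ⟨B, hB, by rw [if_pos hvY, hBe]⟩
        · refine ⟨B₀, hB₀, ?_⟩
          rw [if_neg hvY]
          exact edeg_eq_zero_of_not_mem_verts (fun hvB => hvY (verts_mono hB₀.subset hvB))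
      -- choose the omitted element γ
      obtain ⟨γ, hγD, hγe⟩ : ∃ γ, γ ∈ D ∧
          edeg (D \ {γ}) v = (if v ∈ verts D then edeg D v - 1 else 0) := by
        by_cases hvD : v ∈ verts D
        · obtain ⟨e, heD, hve⟩ := id hvD
          refine ⟨e, heD, ?_⟩
          rw [if_pos hvD]
          have := edeg_diff_singleton heD hve
          omega
        · refine ⟨γ₀, hγ₀, ?_⟩
          rw [if_neg hvD]
          exact edeg_eq_zero_of_not_mem_verts
            (fun hvB => hvD (verts_mono Set.diff_subset hvB))
      have hbase := ear_basis hYE hC h1 h2 hmin hγD hBv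
      have hle := mdeg_le hbase v
      rw [edeg_union_disjoint (hdisjB Bv hBv γ), hBve, hγe] at hle
      exact hle
    -- sums
    have hsum : ∑ᶠ v ∈ verts (Y ∪ C), mdeg M (Y ∪ C) v ≤
        (∑ᶠ v ∈ verts Y, mdeg M Y v) + ∑ v ∈ (verts D).toFinite.toFinset, (edeg D v - 1) := by
      rw [finsum_verts_eq, finsum_verts_eq]
      calc ∑ v ∈ (verts (Y ∪ C)).toFinite.toFinset, mdeg M (Y ∪ C) v
          ≤ ∑ v ∈ (verts (Y ∪ C)).toFinite.toFinset,
            ((if v ∈ verts Y then mdeg M Y v else 0) +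
             (if v ∈ verts D then edeg D v - 1 else 0)) := by
            refine Finset.sum_le_sum (fun v hv => ?_)
            rw [Set.Finite.mem_toFinset] at hv
            exact hpt v hv
        _ = (∑ v ∈ (verts (Y ∪ C)).toFinite.toFinset, (if v ∈ verts Y then mdeg M Y v else 0)) +
            (∑ v ∈ (verts (Y ∪ C)).toFinite.toFinset, (if v ∈ verts D then edeg D v - 1 else 0)) :=
            Finset.sum_add_distrib
        _ = (∑ v ∈ (verts Y).toFinite.toFinset, mdeg M Y v) +
            ∑ v ∈ (verts D).toFinite.toFinset, (edeg D v - 1) := by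
            congr 1
            · rw [← Finset.sum_filter (p := fun v => v ∈ verts Y)]
              congr 1
              ext v
              simp only [Finset.mem_filter, Set.Finite.mem_toFinset, hVX, Set.mem_union]
              tauto
            · rw [← Finset.sum_filter (p := fun v => v ∈ verts D)]
              congr 1
              ext v
              simp only [Finset.mem_filter, Set.Finite.mem_toFinset, hVX, Set.mem_union]
              tauto
    -- degree sum over D
    have hDsum : (∑ v ∈ (verts D).toFinite.toFinset, (edeg D v - 1)) + (verts D).ncard
        = 2 * D.ncard := by
      rw [← handshake (fun e he => hEG e (hE ▸ hC.1 (hDC he))), finsum_verts_eq,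
        Set.ncard_eq_toFinset_card _ (Set.toFinite _)]
      calc (∑ v ∈ (verts D).toFinite.toFinset, (edeg D v - 1)) + (verts D).toFinite.toFinset.card
          = ∑ v ∈ (verts D).toFinite.toFinset, ((edeg D v - 1) + 1) := by
            rw [Finset.sum_add_distrib, Finset.sum_const, smul_eq_mul, mul_one]
        _ = ∑ v ∈ (verts D).toFinite.toFinset, edeg D v := by
            refine Finset.sum_congr rfl (fun v hv => ?_)
            rw [Set.Finite.mem_toFinset] at hv
            have := one_le_edeg_of_mem_verts hv
            omega
    -- vertex count
    have hvcount : (verts (Y ∪ C)).ncard + (verts Y ∩ verts D).ncard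
        = (verts Y).ncard + (verts D).ncard := by
      rw [hVX, add_comm]
      exact Set.ncard_inter_add_ncard_union _ _ (verts Y).toFinite (verts D).toFinite
    omega
  -- done

end Main
/-- Let `M` be a matroid on the edge set of a graph `G` in which every
circuit induces a 2-connected subgraph, and let `X` be a connected set in `M`. Then
`Σ_{v ∈ V(X)} min{d_B(v) : B a base of X} ≤ 2(r(X)+1) − |V(X)|`. -/
theorem sum_min_degree_le {V : Type*} [Fintype V] (EG : Set (Sym2 V))
    (hEG : ∀ e ∈ EG, ¬ e.IsDiag)
    (M : Matroid (Sym2 V)) (hE : M.E = EG)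
    (h2c : ∀ C, _root_.IsCircuit M C → TwoConnEdges C)
    (X : Set (Sym2 V)) (hX : X ⊆ EG) (hconn : MConnected M X) :
    (∑ᶠ v ∈ verts X, sInf {k | ∃ B, M.IsBasis B X ∧ k = edeg B v}) + (verts X).ncard
      ≤ 2 * (nr M X + 1) := by
  classical
  show (∑ᶠ v ∈ verts X, mdeg M X v) + (verts X).ncard ≤ 2 * (nr M X + 1)
  have hXE : X ⊆ M.E := hE ▸ hX
  by_cases hsing : ∃ e f, e ∈ X ∧ f ∈ X ∧ e ≠ f
  · obtain ⟨e, f, he, hf, hef⟩ := hsing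
    exact chain_ineq hEG hE h2c (hconn.mchain hXE he hf hef)
  · push_neg at hsing
    obtain ⟨e₀, he₀⟩ := hconn.1
    have hXeq : X = {e₀} := by
      apply Set.eq_singleton_iff_unique_mem.mpr
      exact ⟨he₀, fun x hx => by
        by_contra hne
        exact hne (hsing x e₀ hx he₀)⟩
    subst hXeq
    obtain ⟨a, b, hab, habe⟩ := exists_two_verts (hEG e₀ (hX rfl))
    have hverts : verts {e₀} = {a, b} := by
      ext v
      constructor
      · rintro ⟨e, he, hv⟩
        rw [Set.mem_singleton_iff] at he
        subst he
        rw [habe, Sym2.mem_iff] at hv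
        exact hv
      · rintro hv
        exact ⟨e₀, rfl, by rw [habe, Sym2.mem_iff]; exact hv⟩
    have hind : M.Indep {e₀} := by
      by_contra hdep
      obtain ⟨C, hCsub, hC⟩ := exists_circuit_of_dep (hE ▸ hX) hdep
      have hCeq : C = {e₀} := by
        obtain ⟨c, hc⟩ := hC.nonempty
        have := hCsub hc
        rw [Set.mem_singleton_iff] at this
        subst this
        exact Set.Subset.antisymm hCsub (Set.singleton_subset_iff.mpr hc)
      have h3 := (h2c C hC).1
      rw [hCeq, hverts, Set.ncard_pair hab] at h3
      omega
    have hbasis : M.IsBasis {e₀} {e₀} := hind.isBasis_self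
    have hnr : nr M {e₀} = 1 := by
      rw [nr_eq_ncard_of_basis hbasis, Set.ncard_singleton]
    have hmdeg : ∀ v, mdeg M {e₀} v ≤ 1 := by
      intro v
      refine le_trans (mdeg_le hbasis v) ?_
      have : {e ∈ ({e₀} : Set (Sym2 V)) | v ∈ e} ⊆ {e₀} := Set.sep_subset _ _
      have := Set.ncard_le_ncard this (Set.finite_singleton e₀)
      rwa [Set.ncard_singleton] at this
    have hsum : ∑ᶠ v ∈ verts {e₀}, mdeg M {e₀} v ≤ 2 := by
      rw [finsum_verts_eq]
      calc ∑ v ∈ (verts {e₀}).toFinite.toFinset, mdeg M {e₀} v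
          ≤ ∑ v ∈ (verts {e₀}).toFinite.toFinset, 1 :=
            Finset.sum_le_sum (fun v _ => hmdeg v)
        _ = (verts {e₀}).toFinite.toFinset.card := by
            rw [Finset.sum_const, smul_eq_mul, mul_one]
        _ = 2 := by
            rw [← Set.ncard_eq_toFinset_card _ (Set.toFinite _), hverts, Set.ncard_pair hab]
    have hvcard : (verts ({e₀} : Set (Sym2 V))).ncard = 2 := by
      rw [hverts, Set.ncard_pair hab]
    omega
end
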